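/- Let G = (V,E) be an infinite, connected, locally finite graph, let o ∈ V, let A ⊆ V be a finite set of vertices containing o, and let p ∈ (0,1). Starting from the unit point mass δ_o at o, the minimum number of toppling moves needed to transport mass p outside of A satisfies N_p(G, A, δ_o) ≤ (1−p)^{−1} · Vol(A) · E_o[T_A], where Vol(A) = |A| is the number of vertices of A, T_A is the first exit time of simple random walk on G started at o from the set A, and E_o[T_A] = Σ_{k≥1} P_o(X_j ∈ A for all 0 ≤ j ≤ k−1) is its expectation. -/

import Mathlib

open scoped Classical ENNReal

noncomputable section

variable {V : Type*}

/-- A mass distribution: a nonnegative, finitely supported function on the vertices. -/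
def IsMassDist (μ : V → ℝ) : Prop :=
  (∀ v, 0 ≤ μ v) ∧ (Function.support μ).Finite

/-- The unit point mass at a vertex `o`. -/
def pointMass (o : V) : V → ℝ := fun u => if u = o then 1 else 0

/-- The result of toppling mass `m` at the vertex `v`: remove mass `m` from `v` and
distribute it equally among the neighbors of `v`. -/
def topple (G : SimpleGraph V) [G.LocallyFinite] (μ : V → ℝ) (v : V) (m : ℝ) : V → ℝ :=
  fun u => μ u - (if u = v then m else 0) + (if G.Adj v u then m / (G.degree v : ℝ) else 0)

/-- `ToppleSeq G μ₀ t μ₁` : there is a sequence of `t` valid toppling moves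
taking `μ₀` to `μ₁`. -/
def ToppleSeq (G : SimpleGraph V) [G.LocallyFinite] (μ₀ : V → ℝ) (t : ℕ) (μ₁ : V → ℝ) : Prop :=
  ∃ μs : ℕ → V → ℝ, μs 0 = μ₀ ∧ μs t = μ₁ ∧
    ∀ i < t, ∃ v m, 0 < m ∧ m ≤ μs i v ∧ μs (i + 1) = topple G (μs i) v m

/-- `CanTransport G A p μ₀ t` : starting from `μ₀` there are `t` toppling moves after which
the total mass outside of `A` is at least `p`. -/
def CanTransport (G : SimpleGraph V) [G.LocallyFinite] (A : Set V) (p : ℝ)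
    (μ₀ : V → ℝ) (t : ℕ) : Prop :=
  ∃ μ₁ : V → ℝ, ToppleSeq G μ₀ t μ₁ ∧ p ≤ ∑' v : {v : V // v ∉ A}, μ₁ v

/-- The open ball of radius `n` around `o` in the graph distance. -/
def gball (G : SimpleGraph V) (o : V) (n : ℕ) : Set V := {u | G.dist o u < n}


/-- `killedKernel G A k x y` is the probability that simple random walk on `G` started at `x`
is at `y` at time `k` and has stayed inside `A` at all times `0, 1, …, k-1`. -/
def killedKernel (G : SimpleGraph V) [G.LocallyFinite] (A : Set V) : ℕ → V → V → ℝ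
  | 0 => fun x y => if x = y then 1 else 0
  | (k + 1) => fun x y =>
      ∑ z ∈ G.neighborFinset y,
        killedKernel G A k x z * (if z ∈ A then ((G.degree z : ℝ))⁻¹ else 0)

namespace FPR

variable {V : Type*} (G : SimpleGraph V) [G.LocallyFinite] (A : Set V) (hA : A.Finite)

lemma kk_zero_def (x y : V) : killedKernel G A 0 x y = if x = y then 1 else 0 := rfl

lemma kk_succ_def (k : ℕ) (x y : V) :
    killedKernel G A (k + 1) x y =
      ∑ z ∈ G.neighborFinset y,
        killedKernel G A k x z * (if z ∈ A then ((G.degree z : ℝ))⁻¹ else 0) := rfl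

lemma mem_nbr_comm {u v : V} : u ∈ G.neighborFinset v ↔ v ∈ G.neighborFinset u := by
  simp [SimpleGraph.mem_neighborFinset, SimpleGraph.adj_comm]

lemma kk_nonneg (k : ℕ) (x y : V) : 0 ≤ killedKernel G A k x y := by
  induction k generalizing y with
  | zero => rw [kk_zero_def]; split <;> norm_num
  | succ k ih =>
      rw [kk_succ_def]
      refine Finset.sum_nonneg fun z _ => mul_nonneg (ih z) ?_
      split <;> positivity

/-- Rewrite the recursion as a sum over `hA.toFinset` with a membership indicator. -/
lemma kk_succ_eq (k : ℕ) (x y : V) :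
    killedKernel G A (k + 1) x y =
      ∑ z ∈ hA.toFinset, (if z ∈ G.neighborFinset y then
        killedKernel G A k x z * ((G.degree z : ℝ))⁻¹ else 0) := by
  rw [kk_succ_def]
  calc ∑ z ∈ G.neighborFinset y,
        killedKernel G A k x z * (if z ∈ A then ((G.degree z : ℝ))⁻¹ else 0)
      = ∑ z ∈ G.neighborFinset y ∩ hA.toFinset,
        killedKernel G A k x z * (if z ∈ A then ((G.degree z : ℝ))⁻¹ else 0) := by
        refine (Finset.sum_subset Finset.inter_subset_left fun z hz hz2 => ?_).symm
        have : z ∉ A := fun h => hz2 (Finset.mem_inter.2 ⟨hz, (Set.Finite.mem_toFinset hA).2 h⟩)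
        simp [this]
    _ = ∑ z ∈ G.neighborFinset y ∩ hA.toFinset,
        killedKernel G A k x z * ((G.degree z : ℝ))⁻¹ := by
        refine Finset.sum_congr rfl fun z hz => ?_
        have : z ∈ A := (Set.Finite.mem_toFinset hA).1 (Finset.mem_inter.1 hz).2
        simp [this]
    _ = ∑ z ∈ hA.toFinset ∩ G.neighborFinset y,
        killedKernel G A k x z * ((G.degree z : ℝ))⁻¹ := by rw [Finset.inter_comm]
    _ = _ := (Finset.sum_ite_mem _ _ _).symm

lemma kk_notA (k : ℕ) (z y : V) (hz : z ∉ A) : killedKernel G A (k + 1) z y = 0 := by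
  induction k generalizing y with
  | zero =>
      rw [kk_succ_def]
      refine Finset.sum_eq_zero fun w hw => ?_
      rcases eq_or_ne z w with rfl | h
      · simp [hz]
      · simp [kk_zero_def, h]
  | succ k ih =>
      rw [kk_succ_def]
      exact Finset.sum_eq_zero fun w _ => by rw [ih w, zero_mul]

/-- First-step decomposition of the killed kernel. -/
lemma kk_firstStep (k : ℕ) (z y : V) (hz : z ∈ A) :
    killedKernel G A (k + 1) z y =
      ((G.degree z : ℝ))⁻¹ * ∑ u ∈ G.neighborFinset z, killedKernel G A k u y := by
  induction k generalizing y with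
  | zero =>
      rw [kk_succ_def]
      simp only [kk_zero_def]
      rw [Finset.mul_sum]
      by_cases hy : y ∈ G.neighborFinset z
      · have hzy : z ∈ G.neighborFinset y := (mem_nbr_comm G).2 hy
        rw [Finset.sum_eq_single_of_mem z hzy, Finset.sum_eq_single_of_mem y hy]
        · simp [hz, mul_comm]
        · intro u _ hu
          simp [hu]
        · intro u _ hu
          have : ¬ (z = u) := fun h => hu h.symm
          simp [this]
      · have hzy : z ∉ G.neighborFinset y := fun h => hy ((mem_nbr_comm G).2 h)
        rw [Finset.sum_eq_zero, Finset.sum_eq_zero]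
        · intro u hu
          have : ¬ (u = y) := fun h => hy (h ▸ hu)
          simp [this]
        · intro u hu
          have : ¬ (z = u) := fun h => hzy (h ▸ hu)
          simp [this]
  | succ k ih =>
      rw [kk_succ_def]
      simp only [ih]
      conv_rhs => rw [Finset.mul_sum]
      simp only [kk_succ_def]
      simp only [Finset.sum_mul, Finset.mul_sum]
      rw [Finset.sum_comm]
      refine Finset.sum_congr rfl fun u _ => Finset.sum_congr rfl fun w _ => by ring

/-- Survival probability of the killed walk. -/
def surv (k : ℕ) (z : V) : ℝ := ∑ y ∈ hA.toFinset, killedKernel G A k z y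

lemma surv_nonneg (k : ℕ) (z : V) : 0 ≤ surv G A hA k z :=
  Finset.sum_nonneg fun y _ => kk_nonneg G A k z y

lemma surv_zero_mem (z : V) (hz : z ∈ A) : surv G A hA 0 z = 1 := by
  unfold surv
  simp only [kk_zero_def]
  rw [Finset.sum_ite_eq hA.toFinset z (fun _ => (1:ℝ))]
  simp [hz]

lemma surv_zero_le (z : V) : surv G A hA 0 z ≤ 1 := by
  unfold surv
  simp only [kk_zero_def]
  rw [Finset.sum_ite_eq hA.toFinset z (fun _ => (1:ℝ))]
  split <;> norm_num

lemma surv_succ_le (k : ℕ) (z : V) : surv G A hA (k + 1) z ≤ surv G A hA k z := by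
  unfold surv
  simp only [kk_succ_eq G A hA]
  rw [Finset.sum_comm]
  refine Finset.sum_le_sum fun w _ => ?_
  rw [← Finset.sum_filter, Finset.sum_const, nsmul_eq_mul]
  have hcard : ((hA.toFinset.filter (fun y => w ∈ G.neighborFinset y)).card : ℝ)
      ≤ (G.degree w : ℝ) := by
    have hsub : hA.toFinset.filter (fun y => w ∈ G.neighborFinset y) ⊆ G.neighborFinset w := by
      intro y hy
      exact (mem_nbr_comm G).1 (Finset.mem_filter.1 hy).2
    have := Finset.card_le_card hsub
    rw [SimpleGraph.card_neighborFinset_eq_degree] at this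
    exact_mod_cast this
  calc ((hA.toFinset.filter (fun y => w ∈ G.neighborFinset y)).card : ℝ)
        * (killedKernel G A k z w * ((G.degree w : ℝ))⁻¹)
      ≤ (G.degree w : ℝ) * (killedKernel G A k z w * ((G.degree w : ℝ))⁻¹) := by
        apply mul_le_mul_of_nonneg_right hcard
        exact mul_nonneg (kk_nonneg G A k z w) (by positivity)
    _ = killedKernel G A k z w * ((G.degree w : ℝ) * ((G.degree w : ℝ))⁻¹) := by ring
    _ ≤ killedKernel G A k z w * 1 := by
        apply mul_le_mul_of_nonneg_left _ (kk_nonneg G A k z w)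
        rcases eq_or_ne (G.degree w : ℝ) 0 with h | h
        · simp [h]
        · rw [mul_inv_cancel₀ h]
    _ = killedKernel G A k z w := mul_one _

lemma surv_anti {j k : ℕ} (h : j ≤ k) (z : V) : surv G A hA k z ≤ surv G A hA j z := by
  induction k with
  | zero => simp_all
  | succ k ih =>
      rcases Nat.lt_or_ge j (k+1) with h2 | h2
      · exact le_trans (surv_succ_le G A hA k z) (ih (Nat.lt_succ_iff.1 h2))
      · have : j = k + 1 := le_antisymm h h2
        subst this; rfl

lemma surv_le_one (k : ℕ) (z : V) : surv G A hA k z ≤ 1 :=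
  le_trans (surv_anti G A hA (Nat.zero_le k) z) (surv_zero_le G A hA z)

lemma degree_pos (hconn : G.Connected) [Infinite V] (v : V) : 0 < G.degree v := by
  rw [SimpleGraph.degree_pos_iff_exists_adj]
  obtain ⟨w, hw⟩ := exists_ne v
  refine (hconn.preconnected v w).elim fun p => ?_
  cases p with
  | nil => exact absurd rfl hw.symm
  | cons h q => exact ⟨_, h⟩

lemma surv_lt_one_of_walk (hdeg : ∀ v, 0 < G.degree v) {z w : V} (pw : G.Walk z w)
    (hw : w ∉ A) : surv G A hA pw.length z < 1 := by
  induction pw with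
  | nil =>
      unfold surv
      rw [SimpleGraph.Walk.length_nil]
      simp only [kk_zero_def]
      rw [Finset.sum_ite_eq hA.toFinset _ (fun _ => (1:ℝ))]
      have : _ ∉ hA.toFinset := fun h => hw (hA.mem_toFinset.1 h)
      simp [this]
  | @cons u v w' h p ih =>
      rw [SimpleGraph.Walk.length_cons]
      by_cases hu : u ∈ A
      · have h1 : surv G A hA (p.length + 1) u
            = ((G.degree u : ℝ))⁻¹ * ∑ t ∈ G.neighborFinset u, surv G A hA p.length t := by
          unfold surv
          simp only [kk_firstStep G A _ _ _ hu, ← Finset.mul_sum]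
          rw [Finset.sum_comm]
        rw [h1]
        have h2 : ∑ t ∈ G.neighborFinset u, surv G A hA p.length t
            < ∑ t ∈ G.neighborFinset u, (1:ℝ) := by
          refine Finset.sum_lt_sum (fun t _ => surv_le_one G A hA _ t) ⟨v, ?_, ?_⟩
          · rw [SimpleGraph.mem_neighborFinset]; exact h
          · exact ih hw
        rw [Finset.sum_const, nsmul_eq_mul, SimpleGraph.card_neighborFinset_eq_degree,
          mul_one] at h2
        have hd : (0:ℝ) < (G.degree u : ℝ) := by exact_mod_cast hdeg u
        calc ((G.degree u : ℝ))⁻¹ * ∑ t ∈ G.neighborFinset u, surv G A hA p.length t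
            < ((G.degree u : ℝ))⁻¹ * (G.degree u : ℝ) := by
              exact mul_lt_mul_of_pos_left h2 (by positivity)
          _ = 1 := inv_mul_cancel₀ (ne_of_gt hd)
      · unfold surv
        rw [Finset.sum_eq_zero fun y _ => kk_notA G A p.length u y hu]
        norm_num

/-- Chapman–Kolmogorov for the killed kernel. -/
lemma kk_comp (j : ℕ) (k : ℕ) (x y : V) :
    killedKernel G A (k + (j + 1)) x y =
      ∑ z ∈ hA.toFinset, killedKernel G A k x z * killedKernel G A (j + 1) z y := by
  induction j generalizing y with
  | zero =>
      rw [show k + (0 + 1) = k + 1 by ring, kk_succ_eq G A hA]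
      refine Finset.sum_congr rfl fun z hz => ?_
      have hK1 : killedKernel G A (0 + 1) z y =
          if z ∈ G.neighborFinset y then ((G.degree z : ℝ))⁻¹ else 0 := by
        rw [kk_succ_eq G A hA]
        rw [Finset.sum_eq_single_of_mem z hz]
        · simp [kk_zero_def]
        · intro w _ hw
          have : ¬ (z = w) := fun h => hw h.symm
          simp [kk_zero_def, this]
      rw [hK1]
      split <;> ring
  | succ j ih =>
      have e1 : k + (j + 1 + 1) = (k + (j + 1)) + 1 := by ring
      rw [e1, kk_succ_eq G A hA]
      simp only [ih]
      have e2 : ∀ z, killedKernel G A (j + 1 + 1) z y =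
          ∑ w ∈ hA.toFinset, (if w ∈ G.neighborFinset y then
            killedKernel G A (j + 1) z w * ((G.degree w : ℝ))⁻¹ else 0) :=
        fun z => kk_succ_eq G A hA (j + 1) z y
      simp only [e2, Finset.mul_sum, Finset.sum_mul, ite_mul, zero_mul, mul_ite, mul_zero]
      rw [Finset.sum_comm]
      refine Finset.sum_congr rfl fun z _ => ?_
      by_cases h : z ∈ G.neighborFinset y
      · simp only [if_pos h]
        exact Finset.sum_congr rfl fun w _ => by ring
      · rw [if_neg h]
        exact (Finset.sum_eq_zero fun w _ => if_neg h).symm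

lemma surv_comp (j k : ℕ) (x : V) :
    surv G A hA (k + (j + 1)) x =
      ∑ z ∈ hA.toFinset, killedKernel G A k x z * surv G A hA (j + 1) z := by
  unfold surv
  simp only [kk_comp G A hA j k x, Finset.mul_sum]
  rw [Finset.sum_comm]

lemma surv_contract (j k : ℕ) (x : V) (c : ℝ) (hc0 : 0 ≤ c)
    (hc : ∀ z ∈ hA.toFinset, surv G A hA (j + 1) z ≤ c) :
    surv G A hA (k + (j + 1)) x ≤ c * surv G A hA k x := by
  rw [surv_comp G A hA j k x]
  unfold surv
  rw [Finset.mul_sum]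
  refine Finset.sum_le_sum fun z hz => ?_
  rw [mul_comm c]
  exact mul_le_mul_of_nonneg_left (hc z hz) (kk_nonneg G A k x z)

lemma surv_pow (j : ℕ) (x : V) (c : ℝ) (hc0 : 0 ≤ c)
    (hc : ∀ z ∈ hA.toFinset, surv G A hA (j + 1) z ≤ c) (m : ℕ) :
    surv G A hA (m * (j + 1)) x ≤ c ^ m := by
  induction m with
  | zero => simpa using surv_zero_le G A hA x
  | succ m ih =>
      have e : (m + 1) * (j + 1) = m * (j + 1) + (j + 1) := by ring
      rw [e, pow_succ, mul_comm (c ^ m) c]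
      calc surv G A hA (m * (j + 1) + (j + 1)) x
          ≤ c * surv G A hA (m * (j + 1)) x := surv_contract G A hA j _ x c hc0 hc
        _ ≤ c * c ^ m := mul_le_mul_of_nonneg_left ih hc0

lemma surv_partial_sum_le (o : V) (j : ℕ) (c : ℝ) (hc0 : 0 ≤ c) (hc1 : c < 1)
    (hpow : ∀ m, surv G A hA (m * (j + 1)) o ≤ c ^ m) (n : ℕ) :
    ∑ i ∈ Finset.range n, surv G A hA i o ≤ (j + 1 : ℝ) * (1 - c)⁻¹ := by
  have key : ∀ m : ℕ, ∑ i ∈ Finset.range (m * (j + 1)), surv G A hA i o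
      ≤ ((j : ℝ) + 1) * ∑ i ∈ Finset.range m, c ^ i := by
    intro m
    induction m with
    | zero => simp
    | succ m ih =>
        have e : (m + 1) * (j + 1) = m * (j + 1) + (j + 1) := Nat.succ_mul m (j + 1)
        have hsplit : ∑ i ∈ Finset.range (m * (j + 1) + (j + 1)), surv G A hA i o
            = (∑ i ∈ Finset.range (m * (j + 1)), surv G A hA i o)
              + ∑ i ∈ Finset.Ico (m * (j + 1)) (m * (j + 1) + (j + 1)), surv G A hA i o := by
          rw [Finset.range_eq_Ico, Finset.range_eq_Ico,
            ← Finset.sum_Ico_consecutive _ (Nat.zero_le (m * (j + 1))) (Nat.le_add_right _ _)]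
        rw [e, hsplit, Finset.sum_range_succ, mul_add ((j:ℝ)+1)]
        refine add_le_add ih ?_
        have hbound : ∀ i ∈ Finset.Ico (m * (j + 1)) (m * (j + 1) + (j + 1)),
            surv G A hA i o ≤ c ^ m := by
          intro i hi
          rcases Finset.mem_Ico.1 hi with ⟨h1, _⟩
          exact le_trans (surv_anti G A hA h1 o) (hpow m)
        calc ∑ i ∈ Finset.Ico (m * (j + 1)) (m * (j + 1) + (j + 1)), surv G A hA i o
            ≤ ∑ _i ∈ Finset.Ico (m * (j + 1)) (m * (j + 1) + (j + 1)), c ^ m :=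
              Finset.sum_le_sum hbound
          _ = ((j : ℝ) + 1) * c ^ m := by
              rw [Finset.sum_const, Nat.card_Ico, nsmul_eq_mul]
              simp
  have h1 : ∑ i ∈ Finset.range n, surv G A hA i o
      ≤ ∑ i ∈ Finset.range (n * (j + 1)), surv G A hA i o := by
    apply Finset.sum_le_sum_of_subset_of_nonneg
    · exact Finset.range_subset_range.2 (Nat.le_mul_of_pos_right n (Nat.succ_pos j))
    · intro i _ _; exact surv_nonneg G A hA i o
  refine le_trans h1 (le_trans (key n) ?_)
  have hgeo : ∑ i ∈ Finset.range n, c ^ i ≤ (1 - c)⁻¹ := by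
    have hs : Summable fun i : ℕ => c ^ i := summable_geometric_of_lt_one hc0 hc1
    have := Summable.sum_le_tsum (Finset.range n) (fun i _ => by positivity) hs
    rwa [tsum_geometric_of_lt_one hc0 hc1] at this
  have hj : (0:ℝ) ≤ (j : ℝ) + 1 := by positivity
  exact mul_le_mul_of_nonneg_left hgeo hj

lemma surv_summable (o : V) (j : ℕ) (c : ℝ) (hc0 : 0 ≤ c) (hc1 : c < 1)
    (hpow : ∀ m, surv G A hA (m * (j + 1)) o ≤ c ^ m) :
    Summable fun i : ℕ => surv G A hA i o :=
  summable_of_sum_range_le (fun i => surv_nonneg G A hA i o)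
    (surv_partial_sum_le G A hA o j c hc0 hc1 hpow)

/-- The set of potential "boundary" vertices: all neighbors of vertices of `A`. -/
def BB : Finset V := hA.toFinset.biUnion (fun z => G.neighborFinset z)

lemma kk_support (o : V) (k : ℕ) (v : V) (h : killedKernel G A (k + 1) o v ≠ 0) :
    v ∈ BB G A hA := by
  rw [kk_succ_eq G A hA] at h
  obtain ⟨z, hz, hz2⟩ := Finset.exists_ne_zero_of_sum_ne_zero h
  have hzv : z ∈ G.neighborFinset v := by
    by_contra hc
    simp [hc] at hz2
  exact Finset.mem_biUnion.2 ⟨z, hz, (mem_nbr_comm G).1 hzv⟩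

lemma kk_total (hdeg : ∀ v, 0 < G.degree v) (o : V) (i : ℕ) (U : Finset V)
    (hU : ∀ z ∈ hA.toFinset, G.neighborFinset z ⊆ U) :
    ∑ v ∈ U, killedKernel G A (i + 1) o v = surv G A hA i o := by
  simp only [kk_succ_eq G A hA]
  rw [Finset.sum_comm]
  refine Finset.sum_congr rfl fun z hz => ?_
  rw [← Finset.sum_filter]
  have hfil : U.filter (fun v => z ∈ G.neighborFinset v) = G.neighborFinset z := by
    ext v
    constructor
    · intro hv
      exact (mem_nbr_comm G).1 (Finset.mem_filter.1 hv).2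
    · intro hv
      exact Finset.mem_filter.2 ⟨hU z hz hv, (mem_nbr_comm G).1 hv⟩
  rw [hfil, Finset.sum_const, nsmul_eq_mul, SimpleGraph.card_neighborFinset_eq_degree]
  have hd : ((G.degree z : ℝ)) ≠ 0 := by
    have := hdeg z; positivity
  field_simp

/-- The mass distribution after `k` rounds of toppling. -/
def Mu (o : V) (k : ℕ) : V → ℝ := fun y =>
  if y ∈ A then killedKernel G A k o y
  else ∑ i ∈ Finset.range (k + 1), killedKernel G A i o y

lemma Mu_zero (o : V) (hoA : o ∈ A) : Mu G A o 0 = pointMass o := by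
  funext y
  unfold Mu pointMass
  by_cases hy : y ∈ A
  · simp only [if_pos hy, kk_zero_def]
    exact if_congr eq_comm rfl rfl
  · have hyo : ¬ (y = o) := fun h => hy (h ▸ hoA)
    have hoy : ¬ (o = y) := fun h => hyo h.symm
    simp [hy, hyo, kk_zero_def, hoy]

/-- One round of toppling: topple the full current mass at each vertex of `A`
carrying nonzero mass. -/
lemma sweep (o : V) (j : ℕ) :
    ToppleSeq G (Mu G A o j)
      ((hA.toFinset.filter (fun v => killedKernel G A j o v ≠ 0)).card)
      (Mu G A o (j + 1)) := by
  classical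
  set m : V → ℝ := fun v => killedKernel G A j o v with hm
  set s : Finset V := hA.toFinset.filter (fun v => m v ≠ 0) with hs
  set l : List V := s.toList with hl
  have hlen : l.length = s.card := Finset.length_toList s
  have hnodup : l.Nodup := Finset.nodup_toList s
  set delta : V → V → ℝ := fun v u =>
    (if G.Adj v u then m v / (G.degree v : ℝ) else 0) - (if u = v then m v else 0) with hdelta
  set μs : ℕ → V → ℝ := fun i u => Mu G A o j u + ((l.take i).map (fun v => delta v u)).sum
    with hμs
  have hm_nonneg : ∀ v : V, 0 ≤ m v := fun v => kk_nonneg G A j o v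
  have hdelta_nonneg : ∀ v u : V, u ≠ v → 0 ≤ delta v u := by
    intro v u huv
    simp only [hdelta, if_neg huv, sub_zero]
    split
    · have h1 : 0 ≤ m v := hm_nonneg v
      positivity
    · exact le_refl 0
  refine ⟨μs, ?_, ?_, ?_⟩
  · funext u; simp [hμs]
  · -- endpoint
    funext u
    have htake : l.take s.card = l := by rw [← hlen]; exact List.take_length
    have h1 : μs s.card u = Mu G A o j u + ∑ v ∈ s, delta v u := by
      rw [hμs]
      simp only [htake]
      rw [Finset.sum_map_toList]
    rw [h1]
    have h2 : ∑ v ∈ s, delta v u = ∑ v ∈ hA.toFinset, delta v u := by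
      refine Finset.sum_subset (Finset.filter_subset _ _) fun v hv hvs => ?_
      have hmv : m v = 0 := by
        by_contra hc
        exact hvs (Finset.mem_filter.2 ⟨hv, hc⟩)
      simp [hdelta, hmv]
    rw [h2]
    have h3 : ∑ v ∈ hA.toFinset, delta v u
        = killedKernel G A (j + 1) o u - (if u ∈ hA.toFinset then m u else 0) := by
      simp only [hdelta]
      rw [Finset.sum_sub_distrib]
      congr 1
      · rw [kk_succ_eq G A hA]
        refine Finset.sum_congr rfl fun z _ => ?_
        have hiff : G.Adj z u ↔ z ∈ G.neighborFinset u := by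
          rw [SimpleGraph.mem_neighborFinset]
          exact ⟨SimpleGraph.Adj.symm, SimpleGraph.Adj.symm⟩
        exact if_congr hiff (by rw [div_eq_mul_inv]) rfl
      · exact Finset.sum_ite_eq hA.toFinset u m
    rw [h3]
    unfold Mu
    by_cases hu : u ∈ A
    · have hu' : u ∈ hA.toFinset := hA.mem_toFinset.2 hu
      simp only [if_pos hu, if_pos hu']
      rw [hm]; ring
    · have hu' : u ∉ hA.toFinset := fun h => hu (hA.mem_toFinset.1 h)
      simp only [if_neg hu, if_neg hu']
      rw [sub_zero]
      exact (Finset.sum_range_succ (fun i => killedKernel G A i o u) (j + 1)).symm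
  · -- the individual toppling moves
    intro i hi
    have hil : i < l.length := by rwa [hlen]
    refine ⟨l[i], m l[i], ?_, ?_, ?_⟩
    · have hmem : l[i] ∈ s := Finset.mem_toList.1 (List.getElem_mem hil)
      have := (Finset.mem_filter.1 hmem).2
      exact lt_of_le_of_ne (hm_nonneg _) (Ne.symm this)
    · -- m l[i] ≤ μs i l[i]
      have hmem : l[i] ∈ s := Finset.mem_toList.1 (List.getElem_mem hil)
      have hA' : l[i] ∈ A := hA.mem_toFinset.1 (Finset.mem_filter.1 hmem).1
      have hMu : Mu G A o j l[i] = m l[i] := by unfold Mu; rw [if_pos hA']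
      have hnotin : l[i] ∉ l.take i := by
        intro hmem2
        have hpre : (l.take i ++ [l[i]]).Sublist l := by
          rw [List.take_concat_get']
          exact List.take_sublist _ _
        have hnd := hnodup.sublist hpre
        exact (List.nodup_append.1 hnd).2.2 _ hmem2 _ (List.mem_singleton_self _) rfl
      have hsum : 0 ≤ ((l.take i).map (fun v => delta v l[i])).sum := by
        apply List.sum_nonneg
        intro x hx
        obtain ⟨w, hw, rfl⟩ := List.mem_map.1 hx
        refine hdelta_nonneg w l[i] fun h => hnotin (h ▸ hw)
      have : μs i l[i] = Mu G A o j l[i] + ((l.take i).map (fun v => delta v l[i])).sum := rfl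
      rw [this, hMu]
      linarith
    · -- step equation
      funext u
      have hstep : l.take (i + 1) = l.take i ++ [l[i]] := (List.take_concat_get' l i hil).symm
      have : μs (i + 1) u = μs i u + delta l[i] u := by
        rw [hμs]
        simp only [hstep, List.map_append, List.sum_append]
        simp [add_assoc]
      rw [this]
      unfold topple
      simp only [hdelta]
      ring

/-- Concatenation of toppling sequences. -/
lemma toppleSeq_trans {μ ν ρ : V → ℝ} {a b : ℕ} (h1 : ToppleSeq G μ a ν)
    (h2 : ToppleSeq G ν b ρ) : ToppleSeq G μ (a + b) ρ := by
  obtain ⟨f, hf0, hfa, hfs⟩ := h1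
  obtain ⟨g, hg0, hgb, hgs⟩ := h2
  refine ⟨fun i => if i < a then f i else g (i - a), ?_, ?_, ?_⟩
  · by_cases h : 0 < a
    · simp [h, hf0]
    · have ha : a = 0 := by omega
      subst ha
      simpa [hg0, ← hfa] using hf0
  · have h : ¬ (a + b < a) := by omega
    simp only [if_neg h]
    rw [show a + b - a = b by omega, hgb]
  · intro i hi
    by_cases h : i + 1 < a
    · have hia : i < a := by omega
      obtain ⟨v, mm, hm1, hm2, hm3⟩ := hfs i hia
      refine ⟨v, mm, hm1, by simp only [if_pos hia]; exact hm2, ?_⟩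
      simp only [if_pos h, if_pos hia]
      exact hm3
    · by_cases h' : i < a
      · -- i + 1 = a
        have hia : i + 1 = a := by omega
        obtain ⟨v, mm, hm1, hm2, hm3⟩ := hfs i h'
        refine ⟨v, mm, hm1, by simp only [if_pos h']; exact hm2, ?_⟩
        show (if i + 1 < a then f (i + 1) else g (i + 1 - a))
            = topple G (if i < a then f i else g (i - a)) v mm
        rw [if_neg h, if_pos h']
        have e0 : i + 1 - a = 0 := by omega
        rw [e0, hg0, ← hfa, ← hia]
        exact hm3
      · have hia : a ≤ i := by omega
        obtain ⟨v, mm, hm1, hm2, hm3⟩ := hgs (i - a) (by omega)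
        refine ⟨v, mm, hm1, by simp only [if_neg h']; exact hm2, ?_⟩
        show (if i + 1 < a then f (i + 1) else g (i + 1 - a))
            = topple G (if i < a then f i else g (i - a)) v mm
        rw [if_neg h, if_neg h']
        rw [show i + 1 - a = (i - a) + 1 by omega]
        exact hm3

lemma chain (o : V) (k : ℕ) :
    ToppleSeq G (Mu G A o 0)
      (∑ j ∈ Finset.range k, (hA.toFinset.filter (fun v => killedKernel G A j o v ≠ 0)).card)
      (Mu G A o k) := by
  induction k with
  | zero => exact ⟨fun _ => Mu G A o 0, rfl, rfl, by intro i hi; simp at hi⟩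
  | succ k ih =>
      rw [Finset.sum_range_succ]
      exact toppleSeq_trans G ih (sweep G A hA o k)

/-- The mass outside `A` after `k` rounds. -/
lemma out_mass (hdeg : ∀ v, 0 < G.degree v) (o : V) (hoA : o ∈ A) (k : ℕ) :
    ∑' v : {v : V // v ∉ A}, Mu G A o k v = 1 - surv G A hA k o := by
  classical
  set T : Finset {v : V // v ∉ A} := (BB G A hA).subtype (fun v => v ∉ A) with hT
  have hzero : ∀ b : {v : V // v ∉ A}, b ∉ T → Mu G A o k b.1 = 0 := by
    intro b hb
    have hbBB : b.1 ∉ BB G A hA := by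
      intro hc
      exact hb (Finset.mem_subtype.2 hc)
    unfold Mu
    rw [if_neg b.2]
    refine Finset.sum_eq_zero fun i _ => ?_
    match i with
    | 0 =>
        have : ¬ (o = b.1) := fun h => b.2 (h ▸ hoA)
        simp [kk_zero_def, this]
    | (i + 1) =>
        by_contra hc
        exact hbBB (kk_support G A hA o i b.1 hc)
  rw [tsum_eq_sum hzero]
  have hsub : ∑ b ∈ T, Mu G A o k b.1
      = ∑ v ∈ (BB G A hA).filter (fun v => v ∉ A), Mu G A o k v := by
    rw [hT, Finset.sum_subtype_eq_sum_filter]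
  rw [hsub]
  set F : Finset V := (BB G A hA).filter (fun v => v ∉ A) with hF
  have hFA : ∀ v ∈ F, v ∉ A := fun v hv => (Finset.mem_filter.1 hv).2
  have hMuF : ∀ v ∈ F, Mu G A o k v = ∑ i ∈ Finset.range (k + 1), killedKernel G A i o v := by
    intro v hv
    unfold Mu
    rw [if_neg (hFA v hv)]
  rw [Finset.sum_congr rfl hMuF, Finset.sum_comm]
  have hesc : ∀ i : ℕ, ∑ v ∈ F, killedKernel G A (i + 1) o v
      = surv G A hA i o - surv G A hA (i + 1) o := by
    intro i
    have hdisj : Disjoint hA.toFinset F := by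
      rw [Finset.disjoint_left]
      intro v hv hv2
      exact hFA v hv2 (hA.mem_toFinset.1 hv)
    have hU : ∀ z ∈ hA.toFinset, G.neighborFinset z ⊆ hA.toFinset ∪ F := by
      intro z hz v hv
      by_cases hvA : v ∈ A
      · exact Finset.mem_union_left _ (hA.mem_toFinset.2 hvA)
      · refine Finset.mem_union_right _ (Finset.mem_filter.2 ⟨?_, hvA⟩)
        exact Finset.mem_biUnion.2 ⟨z, hz, hv⟩
    have htot := kk_total G A hA hdeg o i (hA.toFinset ∪ F) hU
    rw [Finset.sum_union hdisj] at htot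
    have hsurv : ∑ v ∈ hA.toFinset, killedKernel G A (i + 1) o v = surv G A hA (i + 1) o := rfl
    rw [hsurv] at htot
    linarith
  have hesc0 : ∑ v ∈ F, killedKernel G A 0 o v = 0 := by
    refine Finset.sum_eq_zero fun v hv => ?_
    have : ¬ (o = v) := fun h => hFA v hv (h ▸ hoA)
    simp [kk_zero_def, this]
  rw [Finset.sum_range_succ' (fun i => ∑ v ∈ F, killedKernel G A i o v) k]
  rw [hesc0, add_zero]
  have : ∑ i ∈ Finset.range k, ∑ v ∈ F, killedKernel G A (i + 1) o v
      = ∑ i ∈ Finset.range k, (surv G A hA i o - surv G A hA (i + 1) o) :=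
    Finset.sum_congr rfl fun i _ => hesc i
  rw [this]
  have htel := Finset.sum_range_sub' (fun i => surv G A hA i o) k
  rw [htel, surv_zero_mem G A hA o hoA]


end FPR

/-- **General upper bound via volume and exit time** (Florescu–Peres–Rácz, Theorem 1.3).
Let `G` be an infinite, connected, locally finite graph, `o ∈ A ⊆ V` with `A` finite and
`p ∈ (0,1)`. Starting from the unit point mass at `o`, mass `p` can be transported outside of `A`
using at most `(1-p)⁻¹ · Vol(A) · E_o[T_A]` toppling moves, where
`E_o[T_A] = ∑_{k ≥ 1} P_o(X_j ∈ A for all 0 ≤ j ≤ k-1)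
          = ∑_{k ≥ 0} ∑_{y ∈ A} killedKernel G A k o y`
is the expected exit time from `A` of simple random walk started at `o`. -/
theorem general_upper_bound_volume_exit_time {V : Type*} (G : SimpleGraph V) [G.LocallyFinite]
    [Infinite V] (hconn : G.Connected) (o : V) (A : Set V) (hA : A.Finite) (hoA : o ∈ A)
    (p : ℝ) (hp0 : 0 < p) (hp1 : p < 1) :
    ∃ t : ℕ, CanTransport G A p (pointMass o) t ∧
      (t : ℝ) ≤ (1 - p)⁻¹ * (hA.toFinset.card : ℝ) *
        ∑' k : ℕ, ∑ y ∈ hA.toFinset, killedKernel G A k o y := by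
  classical
  open FPR in
  have hdeg : ∀ v, 0 < G.degree v := degree_pos G hconn
  obtain ⟨w0, hw0⟩ := (hA.infinite_compl).nonempty
  have hw0' : w0 ∉ A := hw0
  set pz : ∀ z : V, G.Walk z w0 := fun z => (hconn.preconnected z w0).some with hpz
  set L0 : ℕ := hA.toFinset.sup (fun z => (pz z).length) with hL0
  have hAf : o ∈ hA.toFinset := hA.mem_toFinset.2 hoA
  have hne : hA.toFinset.Nonempty := ⟨o, hAf⟩
  set c : ℝ := hA.toFinset.sup' hne (fun z => FPR.surv G A hA (L0 + 1) z) with hc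
  have hcle : ∀ z ∈ hA.toFinset, FPR.surv G A hA (L0 + 1) z ≤ c := fun z hz =>
    Finset.le_sup' _ hz
  have hc1 : c < 1 := by
    rw [hc, Finset.sup'_lt_iff]
    intro z hz
    have h1 : (pz z).length ≤ L0 + 1 :=
      le_trans (Finset.le_sup hz (f := fun z => (pz z).length)) (Nat.le_succ L0)
    exact lt_of_le_of_lt (FPR.surv_anti G A hA h1 z)
      (FPR.surv_lt_one_of_walk G A hA hdeg (pz z) hw0')
  have hc0 : 0 ≤ c := le_trans (FPR.surv_nonneg G A hA (L0 + 1) o) (hcle o hAf)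
  have hpow : ∀ m, FPR.surv G A hA (m * (L0 + 1)) o ≤ c ^ m := fun m =>
    FPR.surv_pow G A hA L0 o c hc0 hcle m
  have hsum : Summable (fun i : ℕ => FPR.surv G A hA i o) :=
    FPR.surv_summable G A hA o L0 c hc0 hc1 hpow
  have hex : ∃ k, FPR.surv G A hA k o ≤ 1 - p := by
    obtain ⟨M, hM⟩ := exists_pow_lt_of_lt_one (show (0:ℝ) < 1 - p by linarith) hc1
    exact ⟨M * (L0 + 1), le_of_lt (lt_of_le_of_lt (hpow M) hM)⟩
  set k0 := Nat.find hex with hk0def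
  have hk0 : FPR.surv G A hA k0 o ≤ 1 - p := Nat.find_spec hex
  have hmin : ∀ i < k0, 1 - p < FPR.surv G A hA i o := fun i hi =>
    lt_of_not_ge (Nat.find_min hex hi)
  set t := ∑ j ∈ Finset.range k0,
    (hA.toFinset.filter (fun v => killedKernel G A j o v ≠ 0)).card with ht
  refine ⟨t, ⟨FPR.Mu G A o k0, ?_, ?_⟩, ?_⟩
  · have hchain := FPR.chain G A hA o k0
    rwa [FPR.Mu_zero G A o hoA] at hchain
  · rw [FPR.out_mass G A hA hdeg o hoA k0]
    linarith
  · have htle : (t : ℝ) ≤ (k0 : ℝ) * (hA.toFinset.card : ℝ) := by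
      have h : t ≤ k0 * hA.toFinset.card := by
        calc t ≤ ∑ _j ∈ Finset.range k0, hA.toFinset.card :=
              Finset.sum_le_sum fun j _ => Finset.card_le_card (Finset.filter_subset _ _)
          _ = k0 * hA.toFinset.card := by
              rw [Finset.sum_const, smul_eq_mul, Finset.card_range]
      exact_mod_cast h
    set E := ∑' k : ℕ, FPR.surv G A hA k o with hE
    have hEeq : (∑' k : ℕ, ∑ y ∈ hA.toFinset, killedKernel G A k o y) = E := rfl
    have hElb : (k0 : ℝ) * (1 - p) ≤ E := by
      have h1 : ∑ _i ∈ Finset.range k0, (1 - p) ≤ ∑ i ∈ Finset.range k0, FPR.surv G A hA i o :=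
        Finset.sum_le_sum fun i hi => le_of_lt (hmin i (Finset.mem_range.1 hi))
      have h2 : ∑ i ∈ Finset.range k0, FPR.surv G A hA i o ≤ E :=
        Summable.sum_le_tsum _ (fun i _ => FPR.surv_nonneg G A hA i o) hsum
      calc (k0 : ℝ) * (1 - p) = ∑ _i ∈ Finset.range k0, (1 - p) := by
            rw [Finset.sum_const, Finset.card_range, nsmul_eq_mul]
        _ ≤ E := le_trans h1 h2
    have h1p : (0:ℝ) < 1 - p := by linarith
    have hk0le : (k0 : ℝ) ≤ (1 - p)⁻¹ * E := by
      have h := (le_div_iff₀ h1p).2 hElb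
      rwa [div_eq_inv_mul] at h
    rw [hEeq]
    calc (t : ℝ) ≤ (k0 : ℝ) * (hA.toFinset.card : ℝ) := htle
      _ ≤ ((1 - p)⁻¹ * E) * (hA.toFinset.card : ℝ) :=
          mul_le_mul_of_nonneg_right hk0le (by positivity)
      _ = (1 - p)⁻¹ * (hA.toFinset.card : ℝ) * E := by ring

end
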